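/- arXiv:1104.0291 — 7 statements merged into one kernel-verified Lean document; each statement's English description precedes it below -/
import Mathlib

section
/- In a Petri net, if every connected component of the reaction graph is strongly connected (weak reversibility), then for any marking m0 that enables every transition, the reachability graph of (N, m0) is strongly connected; in particular m0 is a home marking and the net is live. -/
/-- A transition `t` is enabled at marking `m`. -/
def enabledAt {P T : Type*} (Wm : P → T → ℕ) (m : P → ℕ) (t : T) : Prop :=
  ∀ p, Wm p t ≤ m p

/-- Firing transition `t` at marking `m`. -/
def fireAt {P T : Type*} (Wm Wp : P → T → ℕ) (m : P → ℕ) (t : T) : P → ℕ :=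
  fun p => m p - Wm p t + Wp p t

/-- One step of the reachability graph. -/
def step {P T : Type*} (Wm Wp : P → T → ℕ) (m m' : P → ℕ) : Prop :=
  ∃ t, enabledAt Wm m t ∧ m' = fireAt Wm Wp m t

/-- Reachability relation. -/
def reach {P T : Type*} (Wm Wp : P → T → ℕ) : (P → ℕ) → (P → ℕ) → Prop :=
  Relation.ReflTransGen (step Wm Wp)

/-- Input bag of a transition. -/
def preBag {P T : Type*} (Wm : P → T → ℕ) (t : T) : P → ℕ := fun p => Wm p t

/-- Output bag of a transition. -/
def postBag {P T : Type*} (Wp : P → T → ℕ) (t : T) : P → ℕ := fun p => Wp p t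

/-- `c` is a complex of the net. -/
def isComplex {P T : Type*} (Wm Wp : P → T → ℕ) (c : P → ℕ) : Prop :=
  (∃ t, c = preBag Wm t) ∨ (∃ t, c = postBag Wp t)

/-- Arc of the reaction graph. -/
def rarc {P T : Type*} (Wm Wp : P → T → ℕ) (c c' : P → ℕ) : Prop :=
  ∃ t, c = preBag Wm t ∧ c' = postBag Wp t

/-- Weak reversibility: every connected component of the reaction graph is
strongly connected. -/
def weaklyReversible {P T : Type*} (Wm Wp : P → T → ℕ) : Prop :=
  ∀ c c' : P → ℕ, isComplex Wm Wp c → isComplex Wm Wp c' →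
    Relation.ReflTransGen (fun a b => rarc Wm Wp a b ∨ rarc Wm Wp b a) c c' →
    Relation.ReflTransGen (rarc Wm Wp) c c'

lemma reach_add {P T : Type*} (Wm Wp : P → T → ℕ) (b : P → ℕ) {c c' : P → ℕ}
    (h : Relation.ReflTransGen (rarc Wm Wp) c c') :
    reach Wm Wp (fun p => b p + c p) (fun p => b p + c' p) := by
  induction h with
  | refl => exact Relation.ReflTransGen.refl
  | tail _ harc ih =>
    rename_i x y _
    obtain ⟨t, hx, hy⟩ := harc
    refine ih.tail ⟨t, ?_, ?_⟩
    · intro p; rw [hx]; exact Nat.le_add_left _ _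
    · funext p
      simp only [fireAt, hx, hy, preBag, postBag, Nat.add_sub_cancel]

lemma step_rev {P T : Type*} (Wm Wp : P → T → ℕ) (hWR : weaklyReversible Wm Wp)
    {m m' : P → ℕ} (h : step Wm Wp m m') : reach Wm Wp m' m := by
  obtain ⟨t, hen, hm'⟩ := h
  have hpath : Relation.ReflTransGen (rarc Wm Wp) (postBag Wp t) (preBag Wm t) :=
    hWR _ _ (Or.inr ⟨t, rfl⟩) (Or.inl ⟨t, rfl⟩)
      (Relation.ReflTransGen.single (Or.inr ⟨t, rfl, rfl⟩))
  have := reach_add Wm Wp (fun p => m p - Wm p t) hpath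
  have e1 : (fun p => m p - Wm p t + postBag Wp t p) = m' := by
    funext p; rw [hm']; rfl
  have e2 : (fun p => m p - Wm p t + preBag Wm t p) = m := by
    funext p; exact Nat.sub_add_cancel (hen p)
  rwa [e1, e2] at this

/-- If the net is weakly reversible and `m0` enables every transition, then the
reachability graph of `(N, m0)` is strongly connected; in particular `m0` is a
home marking and the net is live. -/
theorem stmt0 {P T : Type*} [Fintype P] [Fintype T]
    (Wm Wp : P → T → ℕ) (hWR : weaklyReversible Wm Wp)
    (m0 : P → ℕ) (henable : ∀ t, enabledAt Wm m0 t) :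
    (∀ m m', reach Wm Wp m0 m → reach Wm Wp m0 m' → reach Wm Wp m m') ∧
    (∀ m, reach Wm Wp m0 m → reach Wm Wp m m0) ∧
    (∀ m, reach Wm Wp m0 m → ∀ t, ∃ m', reach Wm Wp m m' ∧ enabledAt Wm m' t) := by
  have hback : ∀ m, reach Wm Wp m0 m → reach Wm Wp m m0 := by
    intro m h
    induction h with
    | refl => exact Relation.ReflTransGen.refl
    | tail _ hst ih => exact (step_rev Wm Wp hWR hst).trans ih
  refine ⟨fun m m' h h' => (hback m h).trans h', hback, fun m h t => ⟨m0, hback m h, henable t⟩⟩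
end

section
/- A connected marked graph has deficiency 0 or 1. (That is, if N is a connected Petri net in which every place has exactly one input transition and one output transition, then |C| − ℓ − rank(W) ∈ {0, 1}, where C is the set of complexes, ℓ the number of connected components of the reaction graph, and W = W⁺ − W⁻ the incidence matrix.) -/
/-- The finite set of complexes of the net. -/
def complexes {P T : Type*} [Fintype P] [Fintype T] [DecidableEq P]
    (Wm Wp : P → T → ℕ) : Finset (P → ℕ) :=
  (Finset.univ.image (preBag Wm)) ∪ (Finset.univ.image (postBag Wp))

/-- The (undirected) reaction graph on the set of complexes. -/
def reactionGraph {P T : Type*} [Fintype P] [Fintype T] [DecidableEq P]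
    (Wm Wp : P → T → ℕ) : SimpleGraph {c // c ∈ complexes Wm Wp} :=
  SimpleGraph.fromRel (fun a b => rarc Wm Wp a.1 b.1)

/-- The incidence matrix `W = W⁺ − W⁻` with rational entries. -/
def incidence {P T : Type*} (Wm Wp : P → T → ℕ) : Matrix P T ℚ :=
  Matrix.of fun p t => (Wp p t : ℚ) - (Wm p t : ℚ)

/-- The deficiency `|C| − ℓ − rank W`, as an integer. -/
noncomputable def deficiency {P T : Type*} [Fintype P] [Fintype T] [DecidableEq P]
    (Wm Wp : P → T → ℕ) : ℤ :=
  (Nat.card {c // c ∈ complexes Wm Wp} : ℤ)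
    - (Nat.card (reactionGraph Wm Wp).ConnectedComponent : ℤ)
    - ((incidence Wm Wp).rank : ℤ)

/-- Adjacency of the bipartite net graph on places and transitions. -/
def netAdj {P T : Type*} (Wm Wp : P → T → ℕ) : (P ⊕ T) → (P ⊕ T) → Prop
  | Sum.inl p, Sum.inr t => Wm p t ≠ 0 ∨ Wp p t ≠ 0
  | Sum.inr t, Sum.inl p => Wm p t ≠ 0 ∨ Wp p t ≠ 0
  | _, _ => False

/-- Connectedness of the Petri net. -/
def netConnected {P T : Type*} (Wm Wp : P → T → ℕ) : Prop :=
  ∀ x y : P ⊕ T, Relation.ReflTransGen (netAdj Wm Wp) x y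

/-- Marked graph: all arc weights are at most 1 and every place has exactly one
input transition and exactly one output transition. -/
def isMarkedGraph {P T : Type*} (Wm Wp : P → T → ℕ) : Prop :=
  (∀ p t, Wm p t ≤ 1) ∧ (∀ p t, Wp p t ≤ 1) ∧
  (∀ p, ∃! t, Wm p t ≠ 0) ∧ (∀ p, ∃! t, Wp p t ≠ 0)

set_option linter.unusedSectionVars false
open Module Submodule Finset
open scoped Classical
section MG
variable {P T : Type*} [Fintype P] [Fintype T] [DecidableEq P] [DecidableEq T]
variable (Wm Wp : P → T → ℕ)

local notation "Cx" => {c // c ∈ complexes Wm Wp}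

noncomputable def preC (t : T) : {c // c ∈ complexes Wm Wp} :=
  ⟨preBag Wm t, Finset.mem_union_left _ (Finset.mem_image_of_mem _ (Finset.mem_univ t))⟩
noncomputable def postC (t : T) : {c // c ∈ complexes Wm Wp} :=
  ⟨postBag Wp t, Finset.mem_union_right _ (Finset.mem_image_of_mem _ (Finset.mem_univ t))⟩

noncomputable def dvec (t : T) : {c // c ∈ complexes Wm Wp} → ℚ :=
  Pi.single (postC Wm Wp t) 1 - Pi.single (preC Wm Wp t) 1

lemma mk_pre_eq_mk_post (t : T) :
    (reactionGraph Wm Wp).connectedComponentMk (preC Wm Wp t)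
      = (reactionGraph Wm Wp).connectedComponentMk (postC Wm Wp t) := by
  apply SimpleGraph.ConnectedComponent.sound
  by_cases h : preC Wm Wp t = postC Wm Wp t
  · rw [h]
  · exact SimpleGraph.Adj.reachable (by
      simp only [reactionGraph, SimpleGraph.fromRel_adj]
      exact ⟨h, Or.inl ⟨t, rfl, rfl⟩⟩)

noncomputable def sigmaMap : ({c // c ∈ complexes Wm Wp} → ℚ) →ₗ[ℚ]
    ((reactionGraph Wm Wp).ConnectedComponent → ℚ) where
  toFun f := fun K =>
    ∑ c : Cx, if (reactionGraph Wm Wp).connectedComponentMk c = K then f c else 0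
  map_add' f g := by
    funext K
    simp only [Pi.add_apply, ← Finset.sum_add_distrib]
    exact Finset.sum_congr rfl fun c _ => by split <;> simp
  map_smul' r f := by
    funext K
    simp only [Pi.smul_apply, RingHom.id_apply, Finset.smul_sum]
    exact Finset.sum_congr rfl fun c _ => by split <;> simp

lemma sigmaMap_single (c : Cx) (r : ℚ) :
    sigmaMap Wm Wp (Pi.single c r)
      = Pi.single ((reactionGraph Wm Wp).connectedComponentMk c) r := by
  funext K
  show (∑ c' : Cx, if (reactionGraph Wm Wp).connectedComponentMk c' = K
      then Pi.single c r c' else 0) = _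
  rw [Finset.sum_eq_single c]
  · by_cases h : (reactionGraph Wm Wp).connectedComponentMk c = K
    · subst h; simp [Pi.single_eq_same]
    · simp [h, Pi.single_apply]
  · intro b _ hb
    simp [Pi.single_eq_of_ne hb]
  · simp

lemma sigmaMap_surj : Function.Surjective (sigmaMap Wm Wp) := by
  intro g
  refine ⟨∑ K : (reactionGraph Wm Wp).ConnectedComponent, Pi.single K.out (g K), ?_⟩
  rw [map_sum]
  have : ∀ K : (reactionGraph Wm Wp).ConnectedComponent,
      sigmaMap Wm Wp (Pi.single K.out (g K)) = Pi.single K (g K) := by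
    intro K
    rw [sigmaMap_single]
    have hK : (reactionGraph Wm Wp).connectedComponentMk (Quot.out K) = K := Quot.out_eq K
    rw [hK]
  simp_rw [this]
  exact Finset.univ_sum_single g
end MG

section MG2
variable {P T : Type*} [Fintype P] [Fintype T] [DecidableEq P] [DecidableEq T]
variable (Wm Wp : P → T → ℕ)

noncomputable def Dspan : Submodule ℚ ({c // c ∈ complexes Wm Wp} → ℚ) :=
  span ℚ (Set.range (dvec Wm Wp))

noncomputable def cmk (c : {c // c ∈ complexes Wm Wp}) :
    (reactionGraph Wm Wp).ConnectedComponent :=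
  (reactionGraph Wm Wp).connectedComponentMk c

lemma single_quot_eq {c c' : {c // c ∈ complexes Wm Wp}} (h : cmk Wm Wp c = cmk Wm Wp c') :
    (Dspan Wm Wp).mkQ (Pi.single c (1:ℚ)) = (Dspan Wm Wp).mkQ (Pi.single c' 1) := by
  have hr : (reactionGraph Wm Wp).Reachable c c' := SimpleGraph.ConnectedComponent.eq.mp h
  rw [SimpleGraph.reachable_iff_reflTransGen] at hr
  clear h
  induction hr with
  | refl => rfl
  | tail _ hadj ih =>
    rename_i b c'' _
    rw [ih]
    rw [reactionGraph, SimpleGraph.fromRel_adj] at hadj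
    obtain ⟨-, h | h⟩ := hadj
    · obtain ⟨t, h1, h2⟩ := h
      have hb : b = preC Wm Wp t := Subtype.ext h1
      have hc : c'' = postC Wm Wp t := Subtype.ext h2
      rw [hb, hc, ← sub_eq_zero, ← map_sub, Submodule.mkQ_apply,
        Submodule.Quotient.mk_eq_zero]
      have hd : Pi.single (preC Wm Wp t) (1:ℚ) - Pi.single (postC Wm Wp t) 1
          = -(dvec Wm Wp t) := by rw [dvec]; ring
      rw [hd]
      exact neg_mem (subset_span ⟨t, rfl⟩)
    · obtain ⟨t, h1, h2⟩ := h
      have hb : b = postC Wm Wp t := Subtype.ext h2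
      have hc : c'' = preC Wm Wp t := Subtype.ext h1
      rw [hb, hc, ← sub_eq_zero, ← map_sub, Submodule.mkQ_apply,
        Submodule.Quotient.mk_eq_zero]
      have hd : Pi.single (postC Wm Wp t) (1:ℚ) - Pi.single (preC Wm Wp t) 1
          = dvec Wm Wp t := rfl
      rw [hd]
      exact subset_span ⟨t, rfl⟩

lemma ker_sigma_eq : LinearMap.ker (sigmaMap Wm Wp) = Dspan Wm Wp := by
  apply le_antisymm
  · intro f hf
    rw [LinearMap.mem_ker] at hf
    rw [← Submodule.Quotient.mk_eq_zero (p := Dspan Wm Wp), ← Submodule.mkQ_apply]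
    have hsingle : ∀ c : {c // c ∈ complexes Wm Wp},
        Pi.single c (f c) = f c • (Pi.single c (1:ℚ) : {c // c ∈ complexes Wm Wp} → ℚ) := by
      intro c; rw [← Pi.single_smul, smul_eq_mul, mul_one]
    have hf' : f = ∑ c : {c // c ∈ complexes Wm Wp},
        f c • (Pi.single c (1:ℚ) : {c // c ∈ complexes Wm Wp} → ℚ) := by
      conv_lhs => rw [← Finset.univ_sum_single f]
      exact Finset.sum_congr rfl fun c _ => hsingle c
    rw [hf', map_sum]
    simp_rw [map_smul]
    calc ∑ c : {c // c ∈ complexes Wm Wp},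
          f c • (Dspan Wm Wp).mkQ (Pi.single c (1:ℚ))
        = ∑ c : {c // c ∈ complexes Wm Wp},
            f c • (Dspan Wm Wp).mkQ (Pi.single (Quot.out (cmk Wm Wp c)) 1) := by
          refine Finset.sum_congr rfl fun c _ => ?_
          rw [single_quot_eq Wm Wp (c := c) (c' := Quot.out (cmk Wm Wp c))
            (by exact (Quot.out_eq _).symm)]
      _ = ∑ K : (reactionGraph Wm Wp).ConnectedComponent,
            ∑ c ∈ Finset.univ.filter (fun c => cmk Wm Wp c = K),
              f c • (Dspan Wm Wp).mkQ (Pi.single (Quot.out (cmk Wm Wp c)) 1) :=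
          (Finset.sum_fiberwise Finset.univ (fun c => cmk Wm Wp c) _).symm
      _ = 0 := by
          apply Finset.sum_eq_zero
          intro K _
          have hcg : ∀ c ∈ Finset.univ.filter (fun c => cmk Wm Wp c = K),
              f c • (Dspan Wm Wp).mkQ (Pi.single (Quot.out (cmk Wm Wp c)) 1)
                = f c • (Dspan Wm Wp).mkQ (Pi.single (Quot.out K) 1) := by
            intro c hc
            rw [Finset.mem_filter] at hc
            rw [hc.2]
          rw [Finset.sum_congr rfl hcg, ← Finset.sum_smul]
          have hQ : ∑ c ∈ Finset.univ.filter (fun c => cmk Wm Wp c = K), f c = 0 := by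
            have hK := congrFun hf K
            rw [Finset.sum_filter]
            simp [sigmaMap, cmk] at hK ⊢
            convert hK
            rfl
          rw [hQ, zero_smul]
  · rw [Dspan, span_le]
    rintro _ ⟨t, rfl⟩
    rw [SetLike.mem_coe, LinearMap.mem_ker, dvec, map_sub, sigmaMap_single, sigmaMap_single,
      mk_pre_eq_mk_post, sub_self]
end MG2

section MG3
open scoped Classical
variable {P T : Type*} [Fintype P] [Fintype T] [DecidableEq P] [DecidableEq T]
variable (Wm Wp : P → T → ℕ)

lemma card_eq :
    Fintype.card {c // c ∈ complexes Wm Wp}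
      = finrank ℚ (Dspan Wm Wp) + Nat.card (reactionGraph Wm Wp).ConnectedComponent := by
  haveI : Fintype (reactionGraph Wm Wp).ConnectedComponent := Fintype.ofFinite _
  have h1 := LinearMap.finrank_range_add_finrank_ker (sigmaMap Wm Wp)
  rw [LinearMap.range_eq_top.mpr (sigmaMap_surj Wm Wp), finrank_top,
    Module.finrank_pi, Module.finrank_pi, ker_sigma_eq] at h1
  rw [Nat.card_eq_fintype_card]
  omega

noncomputable def psiMap : ({c // c ∈ complexes Wm Wp} → ℚ) →ₗ[ℚ] (P → ℚ) :=
  Fintype.linearCombination ℚ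
    (fun c : {c // c ∈ complexes Wm Wp} => fun p => ((c.1 p : ℚ)))

lemma psi_dvec (t : T) : psiMap Wm Wp (dvec Wm Wp t) = (incidence Wm Wp).transpose t := by
  rw [dvec, map_sub]
  rw [psiMap, Fintype.linearCombination_apply_single, Fintype.linearCombination_apply_single]
  funext p
  simp [incidence, preC, postC, preBag, postBag]

lemma rank_le_finrank_D : (incidence Wm Wp).rank ≤ finrank ℚ (Dspan Wm Wp) := by
  rw [Matrix.rank_eq_finrank_span_cols]
  have hr : Set.range (incidence Wm Wp).col = psiMap Wm Wp '' Set.range (dvec Wm Wp) := by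
    rw [← Set.range_comp]
    exact congrArg Set.range (funext fun t => (psi_dvec Wm Wp t).symm)
  rw [hr, Submodule.span_image]
  exact (Submodule.finrank_map_le _ _).trans (le_of_eq rfl)

lemma finrank_D_le : finrank ℚ (Dspan Wm Wp) ≤ Fintype.card T := by
  rw [Dspan]
  refine (finrank_span_le_card _).trans ?_
  rw [Set.toFinset_range]
  exact Finset.card_image_le.trans (by simp)
end MG3


section MG4
variable {P T : Type*} [Fintype P] [Fintype T] [DecidableEq P] [DecidableEq T]
variable (Wm Wp : P → T → ℕ)

lemma ker_incidence_le (hmg : isMarkedGraph Wm Wp) (hconn : netConnected Wm Wp) :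
    LinearMap.ker (incidence Wm Wp).mulVecLin ≤ span ℚ {(fun _ => 1 : T → ℚ)} := by
  obtain ⟨hm1, hp1, hmE, hpE⟩ := hmg
  intro v hv
  rw [LinearMap.mem_ker] at hv
  have key : ∀ p : P, v (hpE p).choose = v (hmE p).choose := by
    intro p
    have h0 : ∑ t, ((Wp p t : ℚ) - (Wm p t : ℚ)) * v t = 0 := by
      have h := congrFun hv p
      simpa [Matrix.mulVecLin_apply, Matrix.mulVec, dotProduct, incidence] using h
    have hWp : ∑ t, (Wp p t : ℚ) * v t = v (hpE p).choose := by
      rw [Finset.sum_eq_single (hpE p).choose]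
      · have h1 : Wp p (hpE p).choose = 1 := by
          have h2 := (hpE p).choose_spec.1
          have h3 := hp1 p (hpE p).choose
          omega
        rw [h1]; push_cast; ring
      · intro b _ hb
        have hz : Wp p b = 0 := by
          by_contra h
          exact hb ((hpE p).choose_spec.2 b h)
        rw [hz]; push_cast; ring
      · intro h; exact absurd (Finset.mem_univ _) h
    have hWm : ∑ t, (Wm p t : ℚ) * v t = v (hmE p).choose := by
      rw [Finset.sum_eq_single (hmE p).choose]
      · have h1 : Wm p (hmE p).choose = 1 := by
          have h2 := (hmE p).choose_spec.1
          have h3 := hm1 p (hmE p).choose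
          omega
        rw [h1]; push_cast; ring
      · intro b _ hb
        have hz : Wm p b = 0 := by
          by_contra h
          exact hb ((hmE p).choose_spec.2 b h)
        rw [hz]; push_cast; ring
      · intro h; exact absurd (Finset.mem_univ _) h
    have hsplit : (∑ t, (Wp p t : ℚ) * v t) - ∑ t, (Wm p t : ℚ) * v t = 0 := by
      rw [← Finset.sum_sub_distrib, ← h0]
      exact Finset.sum_congr rfl fun t _ => by ring
    rw [hWp, hWm] at hsplit
    linarith
  set g : P ⊕ T → ℚ := Sum.elim (fun p => v (hpE p).choose) v with hg
  have step : ∀ x y : P ⊕ T, netAdj Wm Wp x y → g x = g y := by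
    intro x y h
    match x, y with
    | Sum.inl p, Sum.inl p' => exact absurd h not_false
    | Sum.inr t, Sum.inr t' => exact absurd h not_false
    | Sum.inl p, Sum.inr t =>
      rcases h with h | h
      · have ht : t = (hmE p).choose := (hmE p).choose_spec.2 t h
        subst ht
        exact key p
      · have ht : t = (hpE p).choose := (hpE p).choose_spec.2 t h
        subst ht
        rfl
    | Sum.inr t, Sum.inl p =>
      rcases h with h | h
      · have ht : t = (hmE p).choose := (hmE p).choose_spec.2 t h
        subst ht
        exact (key p).symm
      · have ht : t = (hpE p).choose := (hpE p).choose_spec.2 t h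
        subst ht
        rfl
  have const : ∀ t t' : T, v t = v t' := by
    intro t t'
    have aux : ∀ y, Relation.ReflTransGen (netAdj Wm Wp) (Sum.inr t) y →
        g (Sum.inr t) = g y := by
      intro y h
      induction h with
      | refl => rfl
      | tail _ hstep ih => exact ih.trans (step _ _ hstep)
    exact aux (Sum.inr t') (hconn _ _)
  by_cases hT : Nonempty T
  · obtain ⟨t0⟩ := hT
    have hv0 : v = v t0 • (fun _ => 1 : T → ℚ) := by
      funext t
      simp [const t t0]
    rw [hv0]
    exact smul_mem _ _ (mem_span_singleton_self _)
  · have hv0 : v = 0 := funext fun t => absurd ⟨t⟩ hT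
    rw [hv0]
    exact zero_mem _

lemma card_T_le (hmg : isMarkedGraph Wm Wp) (hconn : netConnected Wm Wp) :
    Fintype.card T ≤ (incidence Wm Wp).rank + 1 := by
  classical
  have h1 := LinearMap.finrank_range_add_finrank_ker (incidence Wm Wp).mulVecLin
  rw [Module.finrank_pi] at h1
  have h2 : finrank ℚ (LinearMap.ker (incidence Wm Wp).mulVecLin) ≤ 1 := by
    refine (Submodule.finrank_mono (ker_incidence_le Wm Wp hmg hconn)).trans ?_
    refine (finrank_span_le_card _).trans ?_
    simp
  rw [Matrix.rank]
  omega
end MG4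

/-- A connected marked graph has deficiency 0 or 1. -/
theorem stmt1 {P T : Type*} [Fintype P] [Fintype T] [DecidableEq P] [DecidableEq T]
    (Wm Wp : P → T → ℕ) (hmg : isMarkedGraph Wm Wp) (hconn : netConnected Wm Wp) :
    deficiency Wm Wp = 0 ∨ deficiency Wm Wp = 1 := by
  have hcard := card_eq Wm Wp
  have h2 := rank_le_finrank_D Wm Wp
  have h3 := finrank_D_le Wm Wp
  have h4 := card_T_le Wm Wp hmg hconn
  rw [deficiency, Nat.card_eq_fintype_card, hcard]
  push_cast
  omega
end

section
/- Let A be the incidence matrix of the reaction graph of a Petri net and suppose the reaction graph has a terminal strongly connected component C and a transition t0 with t0• ∈ C and •t0 ∉ C. Then for every nonnegative vector v ∈ ℚ^T with v(t0) > 0, one has Av ≠ 0; indeed ∑_{c ∈ C}(Av)(c) ≥ v(t0) > 0. -/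
/-- Entry of the reaction-graph incidence matrix `A(c,t) = 1_{t•=c} − 1_{•t=c}`. -/
def Aentry {P T : Type*} [Fintype P] [DecidableEq P] (Wm Wp : P → T → ℕ) (c : P → ℕ) (t : T) : ℚ :=
  (if postBag Wp t = c then 1 else 0) - (if preBag Wm t = c then 1 else 0)

/-- If `S` is a terminal strongly connected component of the reaction graph and
`t0` is a transition with `t0• ∈ S` and `•t0 ∉ S`, then for every nonnegative
`v` with `v t0 > 0` one has `∑_{c ∈ S} (A v)(c) ≥ v t0 > 0`; in particular
`A v ≠ 0`. -/
theorem stmt3 {P T : Type*} [Fintype P] [Fintype T] [DecidableEq P] [DecidableEq T]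
    (Wm Wp : P → T → ℕ) (S : Finset (P → ℕ))
    (hsub : S ⊆ complexes Wm Wp)
    (hsc : ∀ c ∈ S, ∀ c' ∈ S, Relation.ReflTransGen (rarc Wm Wp) c c')
    (hterm : ∀ t : T, preBag Wm t ∈ S → postBag Wp t ∈ S)
    (t0 : T) (hin : postBag Wp t0 ∈ S) (hout : preBag Wm t0 ∉ S)
    (v : T → ℚ) (hv : ∀ t, 0 ≤ v t) (hv0 : 0 < v t0) :
    v t0 ≤ ∑ c ∈ S, ∑ t, Aentry Wm Wp c t * v t ∧
    ∃ c ∈ complexes Wm Wp, ∑ t, Aentry Wm Wp c t * v t ≠ 0 := by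
  have key : ∀ t : T, ∑ c ∈ S, Aentry Wm Wp c t =
      (if postBag Wp t ∈ S then (1:ℚ) else 0) - (if preBag Wm t ∈ S then 1 else 0) := by
    intro t
    unfold Aentry
    rw [Finset.sum_sub_distrib, Finset.sum_ite_eq, Finset.sum_ite_eq]
  have hmain : v t0 ≤ ∑ c ∈ S, ∑ t, Aentry Wm Wp c t * v t := by
    rw [Finset.sum_comm]
    have : ∀ t : T, (∑ c ∈ S, Aentry Wm Wp c t * v t) = (∑ c ∈ S, Aentry Wm Wp c t) * v t := by
      intro t; rw [Finset.sum_mul]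
    simp_rw [this, key]
    have h0 : ∀ t : T, t ∈ Finset.univ →
        0 ≤ ((if postBag Wp t ∈ S then (1:ℚ) else 0) - (if preBag Wm t ∈ S then 1 else 0)) * v t := by
      intro t _
      apply mul_nonneg _ (hv t)
      by_cases h : preBag Wm t ∈ S
      · simp [h, hterm t h]
      · simp [h]; positivity
    have ht0 : v t0 = ((if postBag Wp t0 ∈ S then (1:ℚ) else 0) - (if preBag Wm t0 ∈ S then 1 else 0)) * v t0 := by
      simp [hin, hout]
    rw [ht0]
    exact Finset.single_le_sum h0 (Finset.mem_univ t0)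
  refine ⟨hmain, ?_⟩
  by_contra h
  push_neg at h
  have : ∑ c ∈ S, ∑ t, Aentry Wm Wp c t * v t = 0 :=
    Finset.sum_eq_zero fun c hc => h c (hsub hc)
  rw [this] at hmain
  exact absurd (lt_of_lt_of_le hv0 hmain) (lt_irrefl 0)
end

section
/- If a Petri net (N, m0) is live and bounded (hence admits a strictly positive T-semi-flow) and has deficiency zero, then it is weakly reversible. -/
/-- Deficiency zero, characterised by the existence of a witness for every
complex, i.e. the factorisation `A = B W`. -/
def deficiencyZero {P T : Type*} [Fintype P] [Fintype T] [DecidableEq P]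
    (Wm Wp : P → T → ℕ) : Prop :=
  ∀ c ∈ complexes Wm Wp, ∃ w : P → ℚ, ∀ t,
    ∑ p, w p * ((Wp p t : ℚ) - (Wm p t : ℚ)) = Aentry Wm Wp c t


section Aux
variable {P T : Type*} (Wm Wp : P → T → ℕ)

inductive FireSeq : (P → ℕ) → List T → (P → ℕ) → Prop
  | nil (m) : FireSeq m [] m
  | cons {m t l m''} (h1 : enabledAt Wm m t)
      (h2 : FireSeq (fireAt Wm Wp m t) l m'') : FireSeq m (t :: l) m''

variable {Wm Wp}

lemma FireSeq.append {m l m' l' m''} (h : FireSeq Wm Wp m l m')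
    (h' : FireSeq Wm Wp m' l' m'') : FireSeq Wm Wp m (l ++ l') m'' := by
  induction h with
  | nil => simpa
  | cons h1 h2 ih => exact FireSeq.cons h1 (ih h')

lemma FireSeq.toReach {m l m'} (h : FireSeq Wm Wp m l m') : reach Wm Wp m m' := by
  induction h with
  | nil => exact Relation.ReflTransGen.refl
  | cons h1 h2 ih => exact Relation.ReflTransGen.head ⟨_, h1, rfl⟩ ih

lemma reach.toFireSeq {m m'} (h : reach Wm Wp m m') : ∃ l, FireSeq Wm Wp m l m' := by
  induction h with
  | refl => exact ⟨[], FireSeq.nil m⟩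
  | tail hr hs ih =>
    obtain ⟨l, hl⟩ := ih
    obtain ⟨t, ht, rfl⟩ := hs
    exact ⟨l ++ [t], hl.append (FireSeq.cons ht (FireSeq.nil _))⟩

lemma count_cons_sum [Fintype T] [DecidableEq T] (t : T) (l : List T) (d : T → ℚ) :
    ∑ t', (((t :: l).count t' : ℕ) : ℚ) * d t'
      = d t + ∑ t', ((l.count t' : ℕ) : ℚ) * d t' := by
  have h : ∀ t' : T, (((t :: l).count t' : ℕ) : ℚ)
      = ((l.count t' : ℕ) : ℚ) + if t' = t then 1 else 0 := by
    intro t'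
    rw [List.count_cons]
    rcases eq_or_ne t' t with h | h
    · subst h; simp
    · have hb : (t == t') = false := by simp [Ne.symm h]
      simp [hb, h]
  simp_rw [h, add_mul, Finset.sum_add_distrib, ite_mul, one_mul, zero_mul,
    Finset.sum_ite_eq' Finset.univ t d]
  simp [add_comm]

lemma FireSeq.balance [Fintype T] [DecidableEq T] {m l m'} (h : FireSeq Wm Wp m l m') (p : P) :
    (m' p : ℚ) = m p + ∑ t, (l.count t : ℚ) * ((Wp p t : ℚ) - Wm p t) := by
  induction h with
  | nil => simp
  | @cons m t l m'' h1 h2 ih =>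
    have hfire : ((fireAt Wm Wp m t) p : ℚ) = m p + ((Wp p t : ℚ) - Wm p t) := by
      have := h1 p
      simp only [fireAt]
      push_cast [Nat.cast_sub this]
      ring
    rw [ih, hfire, count_cons_sum t l (fun t' => (Wp p t' : ℚ) - Wm p t')]
    ring

end Aux

section Main
variable {P T : Type*} [Fintype P] [Fintype T] [DecidableEq P] [DecidableEq T]

lemma existsPosFlow (Wm Wp : P → T → ℕ) (m0 : P → ℕ)
    (hlive : ∀ m, reach Wm Wp m0 m → ∀ t, ∃ m', reach Wm Wp m m' ∧ enabledAt Wm m' t)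
    (hbounded : {m | reach Wm Wp m0 m}.Finite) :
    ∃ v : T → ℚ, (∀ t, 0 < v t) ∧ ∀ p, ∑ t, v t * ((Wp p t : ℚ) - Wm p t) = 0 := by
  classical
  have allFire : ∀ (ts : List T) (m : P → ℕ), reach Wm Wp m0 m →
      ∃ l m', FireSeq Wm Wp m l m' ∧ reach Wm Wp m0 m' ∧ ∀ t ∈ ts, t ∈ l := by
    intro ts
    induction ts with
    | nil => exact fun m hm => ⟨[], m, FireSeq.nil m, hm, by simp⟩
    | cons t ts ih =>
      intro m hm
      obtain ⟨m1, hm1, ht⟩ := hlive m hm t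
      obtain ⟨l0, hl0⟩ := hm1.toFireSeq
      have hseq1 : FireSeq Wm Wp m (l0 ++ [t]) (fireAt Wm Wp m1 t) :=
        hl0.append (FireSeq.cons ht (FireSeq.nil _))
      have hm2 : reach Wm Wp m0 (fireAt Wm Wp m1 t) := hm.trans hseq1.toReach
      obtain ⟨l1, m3, hseq2, hm3, hmem⟩ := ih _ hm2
      refine ⟨(l0 ++ [t]) ++ l1, m3, hseq1.append hseq2, hm3, ?_⟩
      intro t' ht'
      rcases List.mem_cons.1 ht' with rfl | h
      · simp
      · exact List.mem_append.2 (Or.inr (hmem t' h))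
  have next : ∀ q : {m : P → ℕ // reach Wm Wp m0 m},
      ∃ (l : List T) (m' : P → ℕ), reach Wm Wp m0 m' ∧ FireSeq Wm Wp q.1 l m' ∧ ∀ t : T, t ∈ l := by
    intro q
    obtain ⟨l, m', h1, h2, h3⟩ := allFire Finset.univ.toList q.1 q.2
    exact ⟨l, m', h2, h1, fun t => h3 t (Finset.mem_toList.2 (Finset.mem_univ t))⟩
  choose L M hM hF hmem using next
  let seq : ℕ → {m : P → ℕ // reach Wm Wp m0 m} :=
    fun n => Nat.rec ⟨m0, Relation.ReflTransGen.refl⟩ (fun _ q => ⟨M q, hM q⟩) n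
  have hseqstep : ∀ n, FireSeq Wm Wp (seq n).1 (L (seq n)) (seq (n+1)).1 := fun n => hF (seq n)
  have chain : ∀ (k i : ℕ), ∃ ll, FireSeq Wm Wp (seq i).1 ll (seq (i+k)).1 := by
    intro k
    induction k with
    | zero => exact fun i => ⟨[], FireSeq.nil _⟩
    | succ k ih =>
      intro i
      obtain ⟨ll, hll⟩ := ih (i+1)
      have harith : i + (k+1) = (i+1) + k := by omega
      rw [harith]
      exact ⟨L (seq i) ++ ll, (hseqstep i).append hll⟩
  obtain ⟨i, j, hij, heq⟩ :=
    Set.Finite.exists_lt_map_eq_of_forall_mem (f := fun n => (seq n).1)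
      (fun n => (seq n).2) hbounded
  obtain ⟨ll', hll'⟩ := chain (j - i - 1) (i+1)
  have harith : (i+1) + (j - i - 1) = j := by omega
  rw [harith] at hll'
  have hfull : FireSeq Wm Wp (seq i).1 (L (seq i) ++ ll') (seq j).1 :=
    (hseqstep i).append hll'
  set ll := L (seq i) ++ ll' with hlldef
  refine ⟨fun t => (ll.count t : ℚ), ?_, ?_⟩
  · intro t
    have : t ∈ ll := List.mem_append.2 (Or.inl (hmem (seq i) t))
    simp only []
    exact_mod_cast List.count_pos_iff.2 this
  · intro p
    have hb := hfull.balance p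
    rw [← heq] at hb
    linarith [hb]

end Main

section Thm
variable {P T : Type*} [Fintype P] [Fintype T] [DecidableEq P] [DecidableEq T]

lemma isComplex_iff_mem (Wm Wp : P → T → ℕ) (c : P → ℕ) :
    isComplex Wm Wp c ↔ c ∈ complexes Wm Wp := by
  simp only [isComplex, complexes, Finset.mem_union, Finset.mem_image, Finset.mem_univ,
    true_and]
  constructor
  · rintro (⟨t, rfl⟩ | ⟨t, rfl⟩)
    · exact Or.inl ⟨t, rfl⟩
    · exact Or.inr ⟨t, rfl⟩
  · rintro (⟨t, rfl⟩ | ⟨t, rfl⟩)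
    · exact Or.inl ⟨t, rfl⟩
    · exact Or.inr ⟨t, rfl⟩

theorem stmt4' (Wm Wp : P → T → ℕ) (m0 : P → ℕ)
    (hlive : ∀ m, reach Wm Wp m0 m → ∀ t, ∃ m', reach Wm Wp m m' ∧ enabledAt Wm m' t)
    (hbounded : {m | reach Wm Wp m0 m}.Finite)
    (hdef : deficiencyZero Wm Wp) :
    weaklyReversible Wm Wp := by
  classical
  obtain ⟨v, hv, hWv⟩ := existsPosFlow Wm Wp m0 hlive hbounded
  have rowZero : ∀ c ∈ complexes Wm Wp, ∑ t, Aentry Wm Wp c t * v t = 0 := by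
    intro c hc
    obtain ⟨w, hw⟩ := hdef c hc
    have h1 : ∑ t, Aentry Wm Wp c t * v t
        = ∑ t, (∑ p, w p * ((Wp p t : ℚ) - Wm p t)) * v t :=
      Finset.sum_congr rfl fun t _ => by rw [hw t]
    rw [h1]
    simp_rw [Finset.sum_mul]
    rw [Finset.sum_comm]
    have h2 : ∀ p : P, ∑ t, w p * ((Wp p t : ℚ) - Wm p t) * v t
        = w p * ∑ t, v t * ((Wp p t : ℚ) - Wm p t) := by
      intro p
      rw [Finset.mul_sum]
      exact Finset.sum_congr rfl fun t _ => by ring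
    simp_rw [h2, hWv, mul_zero, Finset.sum_const_zero]
  intro c c' hc hc' hcc'
  set S : Finset (P → ℕ) :=
    (complexes Wm Wp).filter (fun x => Relation.ReflTransGen (rarc Wm Wp) c x) with hSdef
  have hpost_mem : ∀ t : T, postBag Wp t ∈ complexes Wm Wp := fun t =>
    Finset.mem_union_right _ (Finset.mem_image.2 ⟨t, Finset.mem_univ t, rfl⟩)
  have hpre_mem : ∀ t : T, preBag Wm t ∈ complexes Wm Wp := fun t =>
    Finset.mem_union_left _ (Finset.mem_image.2 ⟨t, Finset.mem_univ t, rfl⟩)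
  have hfwd : ∀ t : T, preBag Wm t ∈ S → postBag Wp t ∈ S := by
    intro t ht
    rw [hSdef, Finset.mem_filter] at ht ⊢
    exact ⟨hpost_mem t, ht.2.tail ⟨t, rfl, rfl⟩⟩
  -- flow balance over S
  have hSsum : ∑ t, (∑ x ∈ S, Aentry Wm Wp x t) * v t = 0 := by
    have h0 : ∑ x ∈ S, ∑ t, Aentry Wm Wp x t * v t = 0 :=
      Finset.sum_eq_zero fun x hx => rowZero x (Finset.mem_filter.1 hx).1
    rw [Finset.sum_comm] at h0
    simpa [Finset.sum_mul] using h0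
  have hinner : ∀ t : T, ∑ x ∈ S, Aentry Wm Wp x t
      = (if postBag Wp t ∈ S then (1:ℚ) else 0) - (if preBag Wm t ∈ S then (1:ℚ) else 0) := by
    intro t
    simp only [Aentry]
    rw [Finset.sum_sub_distrib]
    rw [Finset.sum_ite_eq S (postBag Wp t) (fun _ => (1:ℚ)),
      Finset.sum_ite_eq S (preBag Wm t) (fun _ => (1:ℚ))]
  have hnonneg : ∀ t : T, 0 ≤ (∑ x ∈ S, Aentry Wm Wp x t) * v t := by
    intro t
    rw [hinner t]
    rcases Classical.em (preBag Wm t ∈ S) with h | h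
    · simp [h, hfwd t h]
    · rcases Classical.em (postBag Wp t ∈ S) with h' | h'
      · simp only [h, h', if_true, if_false, sub_zero]
        exact le_of_lt (by simpa using hv t)
      · simp [h, h']
  have hback : ∀ t : T, postBag Wp t ∈ S → preBag Wm t ∈ S := by
    intro t ht
    by_contra hpre
    have hterm : (∑ x ∈ S, Aentry Wm Wp x t) * v t = 0 :=
      (Finset.sum_eq_zero_iff_of_nonneg (fun t _ => hnonneg t)).1 hSsum t (Finset.mem_univ t)
    rw [hinner t, if_pos ht, if_neg hpre] at hterm
    simp at hterm
    exact absurd hterm (ne_of_gt (hv t))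
  -- rarc preserves S membership in both directions; conclude by induction
  have hcS : c ∈ S := by
    rw [hSdef, Finset.mem_filter]
    exact ⟨(isComplex_iff_mem Wm Wp c).1 hc, Relation.ReflTransGen.refl⟩
  have main : ∀ x, Relation.ReflTransGen (fun a b => rarc Wm Wp a b ∨ rarc Wm Wp b a) c x →
      x ∈ S ∨ x = c := by
    intro x hx
    induction hx with
    | refl => exact Or.inr rfl
    | @tail b x hr hs ih =>
      have hbS : b ∈ S := by
        rcases ih with h | rfl
        · exact h
        · exact hcS
      left
      rcases hs with h | h
      · obtain ⟨t, rfl, rfl⟩ := h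
        exact hfwd t hbS
      · obtain ⟨t, rfl, rfl⟩ := h
        exact hback t hbS
  rcases main c' hcc' with h | rfl
  · exact (Finset.mem_filter.1 h).2
  · exact Relation.ReflTransGen.refl

end Thm

/-- A live and bounded Petri net of deficiency zero is weakly reversible. -/
theorem stmt4 {P T : Type*} [Fintype P] [Fintype T] [DecidableEq P] [DecidableEq T]
    (Wm Wp : P → T → ℕ) (m0 : P → ℕ)
    (hlive : ∀ m, reach Wm Wp m0 m → ∀ t, ∃ m', reach Wm Wp m m' ∧ enabledAt Wm m' t)
    (hbounded : {m | reach Wm Wp m0 m}.Finite)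
    (hdef : deficiencyZero Wm Wp) :
    weaklyReversible Wm Wp :=
  stmt4' Wm Wp m0 hlive hbounded hdef
end

section
/- Let N be a deficiency-zero Petri net. If there exists a marking m0 such that (N, m0) is live and m0 is a home marking, then N is weakly reversible. -/
section Aux
variable {P T : Type*} [Fintype P] [Fintype T] [DecidableEq P] [DecidableEq T]

lemma preBag_mem_complexes (Wm Wp : P → T → ℕ) (t : T) :
    preBag Wm t ∈ complexes Wm Wp := by
  simp only [complexes, Finset.mem_union, Finset.mem_image]
  exact Or.inl ⟨t, Finset.mem_univ t, rfl⟩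

lemma postBag_mem_complexes (Wm Wp : P → T → ℕ) (t : T) :
    postBag Wp t ∈ complexes Wm Wp := by
  simp only [complexes, Finset.mem_union, Finset.mem_image]
  exact Or.inr ⟨t, Finset.mem_univ t, rfl⟩

lemma reach_count (Wm Wp : P → T → ℕ) {m m' : P → ℕ} (h : reach Wm Wp m m') :
    ∃ σ : T → ℕ, ∀ p, m' p + ∑ t, σ t * Wm p t = m p + ∑ t, σ t * Wp p t := by
  induction h with
  | refl => exact ⟨0, by simp⟩
  | tail _ hbc ih =>
    obtain ⟨σ, hσ⟩ := ih
    obtain ⟨t, ht, rfl⟩ := hbc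
    refine ⟨fun s => σ s + (if s = t then 1 else 0), fun p => ?_⟩
    have hb := hσ p
    have hen : Wm p t ≤ _ := ht p
    have h1 : ∀ W : P → T → ℕ, ∑ s, (σ s + (if s = t then 1 else 0)) * W p s
        = (∑ s, σ s * W p s) + W p t := by
      intro W
      simp [add_mul, Finset.sum_add_distrib, ite_mul]
    rw [h1 Wm, h1 Wp]
    simp only [fireAt]
    omega

lemma cycle_count (Wm Wp : P → T → ℕ) (m0 : P → ℕ)
    (hlive : ∀ m, reach Wm Wp m0 m → ∀ t, ∃ m', reach Wm Wp m m' ∧ enabledAt Wm m' t)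
    (hhome : ∀ m, reach Wm Wp m0 m → reach Wm Wp m m0) (t : T) :
    ∃ σ : T → ℕ, 1 ≤ σ t ∧ ∀ p, ∑ s, σ s * Wm p s = ∑ s, σ s * Wp p s := by
  obtain ⟨m', hr, hen⟩ := hlive m0 Relation.ReflTransGen.refl t
  set m'' := fireAt Wm Wp m' t with hm''
  have hstep : reach Wm Wp m0 m'' := hr.tail ⟨t, hen, rfl⟩
  obtain ⟨σ1, h1⟩ := reach_count Wm Wp hr
  obtain ⟨σ2, h2⟩ := reach_count Wm Wp (hhome m'' hstep)
  refine ⟨fun s => σ1 s + σ2 s + (if s = t then 1 else 0), by simp, fun p => ?_⟩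
  have hsum : ∀ W : P → T → ℕ, ∑ s, (σ1 s + σ2 s + (if s = t then 1 else 0)) * W p s
      = (∑ s, σ1 s * W p s) + (∑ s, σ2 s * W p s) + W p t := by
    intro W
    simp [add_mul, Finset.sum_add_distrib, ite_mul]
  rw [hsum Wm, hsum Wp]
  have e1 := h1 p
  have e2 := h2 p
  have e3 : m'' p + Wm p t = m' p + Wp p t := by
    have := hen p
    simp only [hm'', fireAt]
    omega
  omega

lemma rev_arc (Wm Wp : P → T → ℕ) (v : T → ℚ) (hv : ∀ t, 0 < v t)
    (hA : ∀ c ∈ complexes Wm Wp, ∑ t, Aentry Wm Wp c t * v t = 0)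
    {a b : P → ℕ} (hab : rarc Wm Wp a b) :
    Relation.ReflTransGen (rarc Wm Wp) b a := by
  classical
  set S := (complexes Wm Wp).filter
    (fun c => Relation.ReflTransGen (rarc Wm Wp) b c) with hSdef
  have hmemS : ∀ c, c ∈ S ↔ c ∈ complexes Wm Wp ∧
      Relation.ReflTransGen (rarc Wm Wp) b c := by
    intro c; simp [hSdef]
  -- forward closure of S
  have hclosed : ∀ t, preBag Wm t ∈ S → postBag Wp t ∈ S := by
    intro t hpre
    rcases (hmemS _).mp hpre with ⟨_, hreach⟩
    exact (hmemS _).mpr ⟨postBag_mem_complexes Wm Wp t, hreach.tail ⟨t, rfl, rfl⟩⟩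
  have hsum : ∑ t, (∑ c ∈ S, Aentry Wm Wp c t) * v t = 0 := by
    have : ∑ c ∈ S, ∑ t, Aentry Wm Wp c t * v t = 0 :=
      Finset.sum_eq_zero fun c hc => hA c ((hmemS c).mp hc).1
    rw [Finset.sum_comm] at this
    rw [← this]
    exact Finset.sum_congr rfl fun t _ => by rw [Finset.sum_mul]
  have hentry : ∀ t, ∑ c ∈ S, Aentry Wm Wp c t =
      (if postBag Wp t ∈ S then (1:ℚ) else 0) - (if preBag Wm t ∈ S then 1 else 0) := by
    intro t
    simp only [Aentry, Finset.sum_sub_distrib, Finset.sum_ite_eq]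
  have hnonneg : ∀ t ∈ Finset.univ, (0:ℚ) ≤ (∑ c ∈ S, Aentry Wm Wp c t) * v t := by
    intro t _
    rw [hentry t]
    rcases Classical.em (preBag Wm t ∈ S) with hp | hp
    · simp [hp, hclosed t hp]
    · rcases Classical.em (postBag Wp t ∈ S) with hq | hq
      · simp [hp, hq]; exact le_of_lt (hv t)
      · simp [hp, hq]
  have hzero := (Finset.sum_eq_zero_iff_of_nonneg hnonneg).mp hsum
  -- apply to the transition of the arc a → b
  obtain ⟨t, rfl, rfl⟩ := hab
  have hb : postBag Wp t ∈ S :=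
    (hmemS _).mpr ⟨postBag_mem_complexes Wm Wp t, Relation.ReflTransGen.refl⟩
  have ht := hzero t (Finset.mem_univ t)
  rw [hentry t] at ht
  have ha : preBag Wm t ∈ S := by
    by_contra hpre
    simp [hb, hpre] at ht
    exact (hv t).ne' ht
  exact ((hmemS _).mp ha).2

end Aux

/-- If a deficiency-zero Petri net has a marking `m0` which is live and a home
marking, then the net is weakly reversible. -/
theorem stmt5 {P T : Type*} [Fintype P] [Fintype T] [DecidableEq P] [DecidableEq T]
    (Wm Wp : P → T → ℕ) (hdef : deficiencyZero Wm Wp)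
    (hex : ∃ m0 : P → ℕ,
      (∀ m, reach Wm Wp m0 m → ∀ t, ∃ m', reach Wm Wp m m' ∧ enabledAt Wm m' t) ∧
      (∀ m, reach Wm Wp m0 m → reach Wm Wp m m0)) :
    weaklyReversible Wm Wp := by
  classical
  obtain ⟨m0, hlive, hhome⟩ := hex
  choose σf hσ1 hσW using cycle_count Wm Wp m0 hlive hhome
  set v : T → ℚ := fun s => ((∑ t, σf t s : ℕ) : ℚ) with hvdef
  have hv : ∀ s, 0 < v s := by
    intro s
    have : 1 ≤ ∑ t, σf t s :=
      le_trans (hσ1 s) (Finset.single_le_sum (f := fun t => σf t s) (fun t _ => Nat.zero_le _) (Finset.mem_univ s))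
    simp only [hvdef]
    exact_mod_cast Nat.lt_of_lt_of_le Nat.zero_lt_one this
  have hWv : ∀ p, ∑ s, v s * ((Wp p s : ℚ) - (Wm p s : ℚ)) = 0 := by
    intro p
    have hone : ∀ t, ∑ s, ((σf t s : ℚ)) * ((Wp p s : ℚ) - (Wm p s : ℚ)) = 0 := by
      intro t
      have := hσW t p
      have hc : ((∑ s, σf t s * Wm p s : ℕ) : ℚ) = ((∑ s, σf t s * Wp p s : ℕ) : ℚ) := by
        rw [this]
      push_cast at hc
      simp only [mul_sub, Finset.sum_sub_distrib]
      rw [hc]; ring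
    calc ∑ s, v s * ((Wp p s : ℚ) - (Wm p s : ℚ))
        = ∑ s, ∑ t, ((σf t s : ℚ)) * ((Wp p s : ℚ) - (Wm p s : ℚ)) := by
          refine Finset.sum_congr rfl fun s _ => ?_
          simp only [hvdef]
          push_cast
          rw [Finset.sum_mul]
      _ = ∑ t, ∑ s, ((σf t s : ℚ)) * ((Wp p s : ℚ) - (Wm p s : ℚ)) := Finset.sum_comm
      _ = 0 := Finset.sum_eq_zero fun t _ => hone t
  have hA : ∀ c ∈ complexes Wm Wp, ∑ t, Aentry Wm Wp c t * v t = 0 := by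
    intro c hc
    obtain ⟨w, hw⟩ := hdef c hc
    calc ∑ t, Aentry Wm Wp c t * v t
        = ∑ t, (∑ p, w p * ((Wp p t : ℚ) - (Wm p t : ℚ))) * v t := by
          exact Finset.sum_congr rfl fun t _ => by rw [hw t]
      _ = ∑ t, ∑ p, w p * ((Wp p t : ℚ) - (Wm p t : ℚ)) * v t := by
          exact Finset.sum_congr rfl fun t _ => Finset.sum_mul _ _ _
      _ = ∑ p, ∑ t, w p * ((Wp p t : ℚ) - (Wm p t : ℚ)) * v t := Finset.sum_comm
      _ = ∑ p, w p * ∑ t, v t * ((Wp p t : ℚ) - (Wm p t : ℚ)) := by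
          refine Finset.sum_congr rfl fun p _ => ?_
          rw [Finset.mul_sum]
          exact Finset.sum_congr rfl fun t _ => by ring
      _ = 0 := Finset.sum_eq_zero fun p _ => by rw [hWv p, mul_zero]
  intro c c' hc hc' hund
  clear hc hc'
  induction hund with
  | refl => exact Relation.ReflTransGen.refl
  | tail _ hbc ih =>
    rcases hbc with h | h
    · exact ih.tail h
    · exact ih.trans (rev_arc Wm Wp v hv hA h)
end

section
/- In the k-bit counter Petri net, define the value val(m) = ∑_{i=0}^{k−1} 2^i · m(q_i) of a reachable marking m. Then firing transition t_i increases val by 1 and firing t_i⁻ decreases val by 1; consequently every reachable marking encodes an integer in [0, 2^k − 1] and the firing sequence σ_k defined by σ_1 = t_0, σ_{i+1} = σ_i t_i σ_i leads from the marking encoding 0 to the marking encoding 2^k − 1, with |σ_k| = 2^k − 1. -/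
/-- Pre-matrix of the `k`-bit counter net: places `inl j = p_j`, `inr j = q_j`;
transitions `inl i = t_i`, `inr i = t_i⁻`.  Here `•t_i = p_i + ∑_{j<i} q_j`. -/
def cWm (k : ℕ) : (Fin k ⊕ Fin k) → (Fin k ⊕ Fin k) → ℕ
  | Sum.inl j, Sum.inl i => if j = i then 1 else 0
  | Sum.inr j, Sum.inl i => if (j : ℕ) < (i : ℕ) then 1 else 0
  | Sum.inl j, Sum.inr i => if (j : ℕ) < (i : ℕ) then 1 else 0
  | Sum.inr j, Sum.inr i => if j = i then 1 else 0

/-- Post-matrix of the `k`-bit counter net: `t_i• = q_i + ∑_{j<i} p_j`, and the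
reverse transitions swap input and output bags. -/
def cWp (k : ℕ) (x : Fin k ⊕ Fin k) : (Fin k ⊕ Fin k) → ℕ
  | Sum.inl i => cWm k x (Sum.inr i)
  | Sum.inr i => cWm k x (Sum.inl i)

/-- Initial marking of the counter: each `p_i` marked, each `q_i` empty. -/
def cm0 (k : ℕ) : (Fin k ⊕ Fin k) → ℕ
  | Sum.inl _ => 1
  | Sum.inr _ => 0


/-- The value encoded by a marking: `val(m) = ∑ 2^i · m(q_i)`. -/
def cval (k : ℕ) (m : (Fin k ⊕ Fin k) → ℕ) : ℕ :=
  ∑ i : Fin k, 2 ^ (i : ℕ) * m (Sum.inr i)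

/-- The marking encoding `2^k − 1`: every `q_i` marked, every `p_i` empty. -/
def ctop (k : ℕ) : (Fin k ⊕ Fin k) → ℕ
  | Sum.inl _ => 0
  | Sum.inr _ => 1

/-- Firing a whole sequence of transitions. -/
def fires {P T : Type*} (Wm Wp : P → T → ℕ) : (P → ℕ) → List T → (P → ℕ) → Prop
  | m, [], m' => m' = m
  | m, t :: ts, m' => enabledAt Wm m t ∧ fires Wm Wp (fireAt Wm Wp m t) ts m'

/-- The firing sequence `σ_i`: `σ_1 = t_0`, `σ_{i+1} = σ_i t_i σ_i`. -/
def sigmaSeq (k : ℕ) : ℕ → List (Fin k ⊕ Fin k)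
  | 0 => []
  | i + 1 => sigmaSeq k i ++ (if h : i < k then [Sum.inl ⟨i, h⟩] else []) ++ sigmaSeq k i

-- ===== auxiliary lemmas =====

lemma two_pow_sum (n : ℕ) : ∑ j ∈ Finset.range n, 2 ^ j = 2 ^ n - 1 := by
  induction n with
  | zero => rfl
  | succ n ih =>
    have h1 : 1 ≤ 2 ^ n := Nat.one_le_two_pow
    rw [Finset.sum_range_succ, ih, pow_succ]; omega

lemma sum_lt_pow (k i : ℕ) (h : i ≤ k) :
    ∑ j : Fin k, (if (j : ℕ) < i then 2 ^ (j : ℕ) else 0) = 2 ^ i - 1 := by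
  rw [Fin.sum_univ_eq_sum_range (fun j => if j < i then 2 ^ j else 0) k,
    ← Finset.sum_filter]
  have : (Finset.range k).filter (· < i) = Finset.range i := by
    ext x; simp; omega
  rw [this, two_pow_sum]

lemma sum_eq_pow (k : ℕ) (i : Fin k) :
    ∑ j : Fin k, (if j = i then 2 ^ (j : ℕ) else 0) = 2 ^ (i : ℕ) := by
  simp [Finset.sum_ite_eq']

lemma term_key (c x a b : ℕ) (h : a ≤ x) :
    c * (x - a + b) + c * a = c * x + c * b := by
  rw [← Nat.mul_add, ← Nat.mul_add]
  congr 1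
  omega

lemma val_inc (k : ℕ) (m : (Fin k ⊕ Fin k) → ℕ) (i : Fin k)
    (hen : enabledAt (cWm k) m (Sum.inl i)) :
    cval k (fireAt (cWm k) (cWp k) m (Sum.inl i)) = cval k m + 1 := by
  have ha : ∀ j : Fin k, (if (j : ℕ) < (i : ℕ) then 1 else 0) ≤ m (Sum.inr j) := by
    intro j; simpa [cWm] using hen (Sum.inr j)
  have key : cval k (fireAt (cWm k) (cWp k) m (Sum.inl i))
      + ∑ j : Fin k, 2 ^ (j : ℕ) * (if (j : ℕ) < (i : ℕ) then 1 else 0)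
      = cval k m + ∑ j : Fin k, 2 ^ (j : ℕ) * (if j = i then 1 else 0) := by
    unfold cval
    rw [← Finset.sum_add_distrib, ← Finset.sum_add_distrib]
    refine Finset.sum_congr rfl fun j _ => ?_
    simp only [fireAt, cWp, cWm]
    exact term_key _ _ _ _ (ha j)
  have e1 : ∑ j : Fin k, 2 ^ (j : ℕ) * (if (j : ℕ) < (i : ℕ) then 1 else 0)
      = 2 ^ (i : ℕ) - 1 := by
    rw [← sum_lt_pow k i i.isLt.le]
    exact Finset.sum_congr rfl fun j _ => by split_ifs <;> simp
  have e2 : ∑ j : Fin k, 2 ^ (j : ℕ) * (if j = i then 1 else 0) = 2 ^ (i : ℕ) := by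
    rw [← sum_eq_pow k i]
    exact Finset.sum_congr rfl fun j _ => by split_ifs <;> simp
  rw [e1, e2] at key
  have h1 : 1 ≤ 2 ^ (i : ℕ) := Nat.one_le_two_pow
  omega

lemma val_dec (k : ℕ) (m : (Fin k ⊕ Fin k) → ℕ) (i : Fin k)
    (hen : enabledAt (cWm k) m (Sum.inr i)) :
    cval k (fireAt (cWm k) (cWp k) m (Sum.inr i)) + 1 = cval k m := by
  have ha : ∀ j : Fin k, (if j = i then 1 else 0) ≤ m (Sum.inr j) := by
    intro j; simpa [cWm] using hen (Sum.inr j)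
  have key : cval k (fireAt (cWm k) (cWp k) m (Sum.inr i))
      + ∑ j : Fin k, 2 ^ (j : ℕ) * (if j = i then 1 else 0)
      = cval k m + ∑ j : Fin k, 2 ^ (j : ℕ) * (if (j : ℕ) < (i : ℕ) then 1 else 0) := by
    unfold cval
    rw [← Finset.sum_add_distrib, ← Finset.sum_add_distrib]
    refine Finset.sum_congr rfl fun j _ => ?_
    simp only [fireAt, cWp, cWm]
    exact term_key _ _ _ _ (ha j)
  have e1 : ∑ j : Fin k, 2 ^ (j : ℕ) * (if (j : ℕ) < (i : ℕ) then 1 else 0)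
      = 2 ^ (i : ℕ) - 1 := by
    rw [← sum_lt_pow k i i.isLt.le]
    exact Finset.sum_congr rfl fun j _ => by split_ifs <;> simp
  have e2 : ∑ j : Fin k, 2 ^ (j : ℕ) * (if j = i then 1 else 0) = 2 ^ (i : ℕ) := by
    rw [← sum_eq_pow k i]
    exact Finset.sum_congr rfl fun j _ => by split_ifs <;> simp
  rw [e1, e2] at key
  have h1 : 1 ≤ 2 ^ (i : ℕ) := Nat.one_le_two_pow
  omega

/-- The 1-safeness invariant. -/
def cInv (k : ℕ) (m : (Fin k ⊕ Fin k) → ℕ) : Prop :=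
  ∀ j : Fin k, m (Sum.inl j) + m (Sum.inr j) = 1

lemma inv_step (k : ℕ) {m m' : (Fin k ⊕ Fin k) → ℕ} (hInv : cInv k m)
    (h : step (cWm k) (cWp k) m m') : cInv k m' := by
  obtain ⟨t, hen, rfl⟩ := h
  intro j
  have h1 := hen (Sum.inl j)
  have h2 := hen (Sum.inr j)
  have h3 := hInv j
  rcases t with i | i <;>
    simp only [fireAt, cWm, cWp] at h1 h2 ⊢ <;>
    · rcases lt_trichotomy (j : ℕ) (i : ℕ) with h | h | h
      · have hne : j ≠ i := by intro he; subst he; omega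
        simp only [if_pos h, if_neg hne] at *; omega
      · have he : j = i := Fin.ext h
        have hlt : ¬ ((j : ℕ) < (i : ℕ)) := by omega
        simp only [if_pos he, if_neg hlt] at *; omega
      · have hne : j ≠ i := by intro he; subst he; omega
        have hlt : ¬ ((j : ℕ) < (i : ℕ)) := by omega
        simp only [if_neg hne, if_neg hlt] at *; omega

lemma inv_reach (k : ℕ) {m : (Fin k ⊕ Fin k) → ℕ}
    (h : reach (cWm k) (cWp k) (cm0 k) m) : cInv k m := by
  induction h with
  | refl => intro j; simp [cm0]
  | tail _ h ih => exact inv_step k ih h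

lemma val_bound (k : ℕ) {m : (Fin k ⊕ Fin k) → ℕ} (hInv : cInv k m) :
    cval k m < 2 ^ k := by
  have h1 : cval k m ≤ ∑ j : Fin k, 2 ^ (j : ℕ) := by
    apply Finset.sum_le_sum
    intro j _
    have h := hInv j
    have h' : m (Sum.inr j) ≤ 1 := by omega
    calc 2 ^ (j : ℕ) * m (Sum.inr j) ≤ 2 ^ (j : ℕ) * 1 := Nat.mul_le_mul_left _ h'
      _ = 2 ^ (j : ℕ) := by ring
  have h2 : ∑ j : Fin k, 2 ^ (j : ℕ) = 2 ^ k - 1 := by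
    rw [Fin.sum_univ_eq_sum_range (fun j => 2 ^ j) k, two_pow_sum]
  have h3 : 1 ≤ 2 ^ k := Nat.one_le_two_pow
  omega

lemma fires_append {P T : Type*} (Wm Wp : P → T → ℕ) {m m' m'' : P → ℕ}
    {l1 l2 : List T} (h1 : fires Wm Wp m l1 m') (h2 : fires Wm Wp m' l2 m'') :
    fires Wm Wp m (l1 ++ l2) m'' := by
  induction l1 generalizing m with
  | nil =>
    have he : m' = m := h1
    subst he; simpa using h2
  | cons t ts ih => exact ⟨h1.1, ih h1.2⟩

/-- Marking with the low `i` bits set to 1. -/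
def lowSet (k i : ℕ) (m : (Fin k ⊕ Fin k) → ℕ) : (Fin k ⊕ Fin k) → ℕ
  | Sum.inl j => if (j : ℕ) < i then 0 else m (Sum.inl j)
  | Sum.inr j => if (j : ℕ) < i then 1 else m (Sum.inr j)

/-- Marking after firing `t_i` from `lowSet k i m`. -/
def midM (k i : ℕ) (m : (Fin k ⊕ Fin k) → ℕ) : (Fin k ⊕ Fin k) → ℕ
  | Sum.inl j => if (j : ℕ) < i then 1 else if (j : ℕ) = i then 0 else m (Sum.inl j)
  | Sum.inr j => if (j : ℕ) < i then 0 else if (j : ℕ) = i then 1 else m (Sum.inr j)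

lemma sigma_fires (k : ℕ) : ∀ i ≤ k, ∀ m : (Fin k ⊕ Fin k) → ℕ,
    cInv k m → (∀ j : Fin k, (j : ℕ) < i → m (Sum.inr j) = 0) →
    fires (cWm k) (cWp k) m (sigmaSeq k i) (lowSet k i m) := by
  intro i
  induction i with
  | zero =>
    intro _ m _ _
    show lowSet k 0 m = m
    funext x
    rcases x with j | j <;> simp [lowSet]
  | succ i ih =>
    intro hik m hInv hq
    have hik' : i < k := hik
    have hi : i ≤ k := hik'.le
    have f1 : fires (cWm k) (cWp k) m (sigmaSeq k i) (lowSet k i m) :=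
      ih hi m hInv (fun j hj => hq j (by omega))
    have hqi : m (Sum.inr ⟨i, hik'⟩) = 0 := hq ⟨i, hik'⟩ (by simp)
    have hpi : m (Sum.inl ⟨i, hik'⟩) = 1 := by
      have := hInv ⟨i, hik'⟩; omega
    -- t_i is enabled at `lowSet k i m`
    have hen : enabledAt (cWm k) (lowSet k i m) (Sum.inl ⟨i, hik'⟩) := by
      intro p
      rcases p with j | j
      · rcases eq_or_ne j (⟨i, hik'⟩ : Fin k) with he | hne
        · subst he; simp [cWm, lowSet, hpi]
        · simp [cWm, lowSet, hne]
      · simp only [cWm, lowSet]; split_ifs <;> omega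
    -- firing t_i at `lowSet k i m` yields `midM k i m`
    have f2 : fireAt (cWm k) (cWp k) (lowSet k i m) (Sum.inl ⟨i, hik'⟩)
        = midM k i m := by
      funext x
      rcases x with j | j <;> rcases lt_trichotomy (j : ℕ) i with h | h | h
      · have hne : j ≠ (⟨i, hik'⟩ : Fin k) := by
          intro he; subst he; simp at h
        simp [fireAt, cWm, cWp, lowSet, midM, hne, h]
      · have he : j = (⟨i, hik'⟩ : Fin k) := Fin.ext (by simpa using h)
        subst he
        simp [fireAt, cWm, cWp, lowSet, midM, hpi]
      · have hne : j ≠ (⟨i, hik'⟩ : Fin k) := by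
          intro he; subst he; simp at h
        simp [fireAt, cWm, cWp, lowSet, midM, hne,
          show ¬ (j : ℕ) < i by omega, show (j : ℕ) ≠ i by omega]
      · have hne : j ≠ (⟨i, hik'⟩ : Fin k) := by
          intro he; subst he; simp at h
        simp [fireAt, cWm, cWp, lowSet, midM, hne, h]
      · have he : j = (⟨i, hik'⟩ : Fin k) := Fin.ext (by simpa using h)
        subst he
        simp [fireAt, cWm, cWp, lowSet, midM, hqi]
      · have hne : j ≠ (⟨i, hik'⟩ : Fin k) := by
          intro he; subst he; simp at h
        simp [fireAt, cWm, cWp, lowSet, midM, hne,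
          show ¬ (j : ℕ) < i by omega, show (j : ℕ) ≠ i by omega]
    -- `midM k i m` satisfies the hypotheses
    have hInv2 : cInv k (midM k i m) := by
      intro j
      have := hInv j
      simp only [midM]
      split_ifs <;> omega
    have hq2 : ∀ j : Fin k, (j : ℕ) < i → midM k i m (Sum.inr j) = 0 := by
      intro j hj
      simp [midM, hj]
    have f3 : fires (cWm k) (cWp k) (midM k i m) (sigmaSeq k i)
        (lowSet k i (midM k i m)) := ih hi (midM k i m) hInv2 hq2
    have f4 : lowSet k i (midM k i m) = lowSet k (i + 1) m := by
      funext x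
      rcases x with j | j <;>
        · simp only [lowSet, midM]
          split_ifs <;> omega
    rw [f4] at f3
    have f5 : fires (cWm k) (cWp k) (lowSet k i m) [Sum.inl ⟨i, hik'⟩] (midM k i m) := by
      show enabledAt (cWm k) (lowSet k i m) (Sum.inl ⟨i, hik'⟩) ∧
        fires (cWm k) (cWp k) (fireAt (cWm k) (cWp k) (lowSet k i m) (Sum.inl ⟨i, hik'⟩))
          [] (midM k i m)
      exact ⟨hen, f2.symm⟩
    show fires (cWm k) (cWp k) m
      (sigmaSeq k i ++ (if h : i < k then [Sum.inl ⟨i, h⟩] else []) ++ sigmaSeq k i)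
      (lowSet k (i + 1) m)
    rw [dif_pos hik']
    exact fires_append _ _ (fires_append _ _ f1 f5) f3

lemma sigma_len (k : ℕ) : ∀ i ≤ k, (sigmaSeq k i).length = 2 ^ i - 1 := by
  intro i
  induction i with
  | zero => intro _; rfl
  | succ i ih =>
    intro hik
    have hik' : i < k := hik
    have h1 : 1 ≤ 2 ^ i := Nat.one_le_two_pow
    unfold sigmaSeq
    rw [dif_pos hik']
    simp only [List.length_append, List.length_cons, List.length_nil, ih hik'.le, pow_succ]
    omega

/-- Firing `t_i` increases `val` by 1 and firing `t_i⁻` decreases it by 1;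
every reachable marking encodes an integer in `[0, 2^k − 1]`; and the sequence
`σ_k` of length `2^k − 1` leads from the marking encoding `0` to the marking
encoding `2^k − 1`. -/
theorem stmt7 (k : ℕ) :
    (∀ (m : (Fin k ⊕ Fin k) → ℕ) (i : Fin k), enabledAt (cWm k) m (Sum.inl i) →
      cval k (fireAt (cWm k) (cWp k) m (Sum.inl i)) = cval k m + 1) ∧
    (∀ (m : (Fin k ⊕ Fin k) → ℕ) (i : Fin k), enabledAt (cWm k) m (Sum.inr i) →
      cval k (fireAt (cWm k) (cWp k) m (Sum.inr i)) + 1 = cval k m) ∧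
    (∀ m, reach (cWm k) (cWp k) (cm0 k) m → cval k m < 2 ^ k) ∧
    fires (cWm k) (cWp k) (cm0 k) (sigmaSeq k k) (ctop k) ∧
    (sigmaSeq k k).length = 2 ^ k - 1 := by
  refine ⟨val_inc k, val_dec k, fun m h => val_bound k (inv_reach k h), ?_, ?_⟩
  · have h := sigma_fires k k le_rfl (cm0 k) (fun j => by simp [cm0]) (fun j _ => rfl)
    have he : lowSet k k (cm0 k) = ctop k := by
      funext x
      rcases x with j | j <;> simp [lowSet, ctop, j.isLt]
    rwa [he] at h
  · exact sigma_len k k le_rfl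
end

section
/- In the regulated Petri net A ⊙ N obtained by composing a Petri net N with its reaction Petri net, every complex has a witness; hence A ⊙ N has deficiency zero. Explicitly, for each complex c̃ of A ⊙ N corresponding to a complex c of N, the indicator vector of the place c (in the added copy of the complexes) is a witness of c̃. -/
variable {P T : Type*} [Fintype P] [Fintype T] [DecidableEq P] [DecidableEq T]

/-- Pre-matrix of the regulated net `A ⊙ N`: the places of `N` together with
one new place per complex of `N` (the reaction Petri net is stacked on `N`). -/
def rWm (Wm Wp : P → T → ℕ) : (P ⊕ {c // c ∈ complexes Wm Wp}) → T → ℕ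
  | Sum.inl p, t => Wm p t
  | Sum.inr c, t => if c.1 = preBag Wm t then 1 else 0

/-- Post-matrix of the regulated net `A ⊙ N`. -/
def rWp (Wm Wp : P → T → ℕ) : (P ⊕ {c // c ∈ complexes Wm Wp}) → T → ℕ
  | Sum.inl p, t => Wp p t
  | Sum.inr c, t => if c.1 = postBag Wp t then 1 else 0

/-- The complex `c̃` of `A ⊙ N` corresponding to a complex `c` of `N`. -/
def ctilde (Wm Wp : P → T → ℕ) (c : {c // c ∈ complexes Wm Wp}) :
    (P ⊕ {c // c ∈ complexes Wm Wp}) → ℕ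
  | Sum.inl p => c.1 p
  | Sum.inr d => if d = c then 1 else 0


lemma pre_iff (Wm Wp : P → T → ℕ) (c : {c // c ∈ complexes Wm Wp}) (t : T) :
    preBag (rWm Wm Wp) t = ctilde Wm Wp c ↔ c.1 = preBag Wm t := by
  constructor
  · intro h
    funext p
    exact (congrFun h (Sum.inl p)).symm
  · intro h
    funext x
    cases x with
    | inl p => exact (congrFun h p).symm
    | inr d =>
      show (if d.1 = preBag Wm t then (1:ℕ) else 0) = if d = c then 1 else 0
      rw [← h]
      exact if_congr Subtype.ext_iff.symm rfl rfl

lemma post_iff (Wm Wp : P → T → ℕ) (c : {c // c ∈ complexes Wm Wp}) (t : T) :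
    postBag (rWp Wm Wp) t = ctilde Wm Wp c ↔ c.1 = postBag Wp t := by
  constructor
  · intro h
    funext p
    exact (congrFun h (Sum.inl p)).symm
  · intro h
    funext x
    cases x with
    | inl p => exact (congrFun h p).symm
    | inr d =>
      show (if d.1 = postBag Wp t then (1:ℕ) else 0) = if d = c then 1 else 0
      rw [← h]
      exact if_congr Subtype.ext_iff.symm rfl rfl

lemma key (Wm Wp : P → T → ℕ) (c : {c // c ∈ complexes Wm Wp}) (t : T) :
    ∑ x : P ⊕ {c // c ∈ complexes Wm Wp},
        (if x = Sum.inr c then (1 : ℚ) else 0) *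
          ((rWp Wm Wp x t : ℚ) - (rWm Wm Wp x t : ℚ)) =
      (if postBag (rWp Wm Wp) t = ctilde Wm Wp c then 1 else 0) -
        (if preBag (rWm Wm Wp) t = ctilde Wm Wp c then 1 else 0) := by
  rw [Finset.sum_eq_single (Sum.inr c)]
  · simp only [if_pos rfl, if_true, one_mul, pre_iff, post_iff, rWp, rWm]
    split <;> split <;> simp
  · intro b _ hb
    rw [if_neg hb, zero_mul]
  · intro h
    exact absurd (Finset.mem_univ _) h

/-- In the regulated net `A ⊙ N` every complex `c̃` has a witness, namely the
indicator vector of the added place `q_c`; hence `A ⊙ N` has deficiency zero. -/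
theorem stmt9 (Wm Wp : P → T → ℕ) :
    (∀ (c : {c // c ∈ complexes Wm Wp}) (t : T),
      ∑ x : P ⊕ {c // c ∈ complexes Wm Wp},
          (if x = Sum.inr c then (1 : ℚ) else 0) *
            ((rWp Wm Wp x t : ℚ) - (rWm Wm Wp x t : ℚ)) =
        (if postBag (rWp Wm Wp) t = ctilde Wm Wp c then 1 else 0) -
          (if preBag (rWm Wm Wp) t = ctilde Wm Wp c then 1 else 0)) ∧
    (∃ B : Matrix {c // c ∈ complexes Wm Wp} (P ⊕ {c // c ∈ complexes Wm Wp}) ℚ,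
      ∀ (c : {c // c ∈ complexes Wm Wp}) (t : T),
        ((if postBag (rWp Wm Wp) t = ctilde Wm Wp c then 1 else 0) -
            (if preBag (rWm Wm Wp) t = ctilde Wm Wp c then 1 else 0) : ℚ) =
          ∑ x, B c x * ((rWp Wm Wp x t : ℚ) - (rWm Wm Wp x t : ℚ))) := by
  refine ⟨key Wm Wp, ⟨fun c x => if x = Sum.inr c then 1 else 0, fun c t => ?_⟩⟩
  exact (key Wm Wp c t).symm
end
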